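/- Let F be a finite field of odd cardinality q with quadratic character χ (χ(0)=0). For m ∈ F and arrays S_m : F × F → ℤ defined by S_m(x,y) = χ(x)·χ(m·x + y), the off-peak periodic autocorrelation of S_m is bounded in magnitude by q - 1: for any (u,v) ≠ (0,0), |∑_{x,y ∈ F} S_m(x,y)·S_m(x+u, y+v)| ≤ q - 1. -/

import Mathlib

open Finset

lemma qc_shift_sum (F : Type*) [Field F] [Fintype F] [DecidableEq F]
    (hF : ringChar F ≠ 2) (b : F) (hb : b ≠ 0) :
    ∑ x : F, (quadraticChar F x : ℤ) * quadraticChar F (x + b) = -1 := by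
  have key : ∀ x : F, x ≠ 0 →
      (quadraticChar F x : ℤ) * quadraticChar F (x + b)
        = quadraticChar F (1 + b * x⁻¹) := by
    intro x hx
    have hsq : (quadraticChar F x) ^ 2 = 1 := quadraticChar_sq_one hx
    have hxb : x * (1 + b * x⁻¹) = x + b := by field_simp
    calc (quadraticChar F x : ℤ) * quadraticChar F (x + b)
        = quadraticChar F x * quadraticChar F (x * (1 + b * x⁻¹)) := by rw [hxb]
      _ = (quadraticChar F x) ^ 2 * quadraticChar F (1 + b * x⁻¹) := by rw [map_mul]; ring
      _ = quadraticChar F (1 + b * x⁻¹) := by rw [hsq]; ring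
  rw [← Finset.sum_subset (Finset.subset_univ ({0}ᶜ : Finset F))]
  · rw [Finset.sum_congr rfl (fun x hx => key x (by simpa using hx))]
    have hbij : ∑ x ∈ ({0}ᶜ : Finset F), ((quadraticChar F) (1 + b * x⁻¹) : ℤ)
        = ∑ t ∈ ({1}ᶜ : Finset F), (quadraticChar F t : ℤ) := by
      apply Finset.sum_nbij' (fun x => 1 + b * x⁻¹) (fun t => b * (t - 1)⁻¹)
      · intro x hx
        simp only [Finset.mem_compl, Finset.mem_singleton] at hx ⊢
        intro h
        apply hx
        have : b * x⁻¹ = 0 := by linear_combination h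
        rcases mul_eq_zero.mp this with h' | h'
        · exact absurd h' hb
        · exact inv_eq_zero.mp h'
      · intro t ht
        simp only [Finset.mem_compl, Finset.mem_singleton] at ht ⊢
        exact mul_ne_zero hb (inv_ne_zero (sub_ne_zero.mpr ht))
      · intro x hx
        simp only [Finset.mem_compl, Finset.mem_singleton] at hx
        field_simp
        simp [hb]
      · intro t ht
        simp only [Finset.mem_compl, Finset.mem_singleton] at ht
        have h1 : t - 1 ≠ 0 := sub_ne_zero.mpr ht
        field_simp
        ring
      · intro x hx; rfl
    rw [hbij]
    have hz := quadraticChar_sum_zero hF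
    have h2 : ∑ t ∈ ({1}ᶜ : Finset F), ((quadraticChar F t) : ℤ)
        = (∑ t : F, ((quadraticChar F t) : ℤ)) - quadraticChar F 1 := by
      rw [← Finset.sum_compl_add_sum ({1} : Finset F) (fun t => ((quadraticChar F t) : ℤ))]
      simp
    rw [h2, hz]
    simp
  · intro x _ hx
    simp only [Finset.mem_compl, Finset.mem_singleton, not_not] at hx
    simp [hx]

lemma qc_shift_sum_zero (F : Type*) [Field F] [Fintype F] [DecidableEq F] :
    ∑ x : F, (quadraticChar F x : ℤ) * quadraticChar F (x + 0) = (Fintype.card F : ℤ) - 1 := by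
  have h1 : ∀ x : F, (quadraticChar F x : ℤ) * quadraticChar F (x + 0)
      = 1 - (if x = 0 then 1 else 0) := by
    intro x
    by_cases hx : x = 0
    · simp [hx]
    · rw [add_zero]
      rcases quadraticChar_dichotomy hx with h | h <;> simp [h, hx]
  rw [Finset.sum_congr rfl (fun x _ => h1 x), Finset.sum_sub_distrib, Finset.sum_const,
    Finset.sum_ite_eq' Finset.univ (0 : F) (fun _ => (1 : ℤ))]
  simp [Finset.card_univ]

theorem circulant_legendre_autocorrelation_bound
    (F : Type*) [Field F] [Fintype F] [DecidableEq F]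
    (hodd : Odd (Fintype.card F))
    (χ : F → ℤ) (hχ : ∀ x, χ x = quadraticChar F x)
    (S : F → F × F → ℤ) (hS : ∀ m x y, S m (x, y) = χ x * χ (m * x + y))
    (m : F) (u v : F) (huv : (u, v) ≠ (0, 0)) :
    |∑ x : F, ∑ y : F, S m (x, y) * S m (x + u, y + v)| ≤ (Fintype.card F : ℤ) - 1 := by
  have hF : ringChar F ≠ 2 := by
    intro h
    have h2 := FiniteField.even_card_of_char_two h
    rcases hodd with ⟨k, hk⟩
    omega
  set c := m * u + v with hc
  have hsum : (∑ x : F, ∑ y : F, S m (x, y) * S m (x + u, y + v))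
      = (∑ x : F, (quadraticChar F x : ℤ) * quadraticChar F (x + u))
        * (∑ y : F, (quadraticChar F y : ℤ) * quadraticChar F (y + c)) := by
    have inner : ∀ x : F, (∑ y : F, S m (x, y) * S m (x + u, y + v))
        = ((quadraticChar F x : ℤ) * quadraticChar F (x + u))
          * ∑ y : F, (quadraticChar F y : ℤ) * quadraticChar F (y + c) := by
      intro x
      rw [Finset.mul_sum]
      rw [← Equiv.sum_comp (Equiv.addLeft (m * x)) (fun y =>
        ((quadraticChar F x : ℤ) * quadraticChar F (x + u))
          * ((quadraticChar F y : ℤ) * quadraticChar F (y + c)))]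
      apply Finset.sum_congr rfl
      intro y _
      simp only [Equiv.coe_addLeft]
      rw [hS, hS, hχ, hχ, hχ, hχ]
      rw [show m * (x + u) + (y + v) = m * x + y + c by ring]
      ring
    rw [Finset.sum_congr rfl (fun x _ => inner x), ← Finset.sum_mul]
  rw [hsum]
  have hone : (2 : ℕ) ≤ Fintype.card F := Fintype.one_lt_card
  have hcard : (1 : ℤ) ≤ (Fintype.card F : ℤ) - 1 := by
    have : (2 : ℤ) ≤ (Fintype.card F : ℤ) := by exact_mod_cast hone
    omega
  by_cases hu : u = 0
  · have hv : v ≠ 0 := by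
      intro h; exact huv (by simp [hu, h])
    have hcne : c ≠ 0 := by simp [hc, hu, hv]
    rw [hu, qc_shift_sum_zero, qc_shift_sum F hF c hcne]
    rw [abs_mul]
    simp only [abs_neg, abs_one, mul_one]
    rw [abs_of_nonneg (by omega)]
  · rw [qc_shift_sum F hF u hu]
    by_cases hcz : c = 0
    · rw [hcz, qc_shift_sum_zero, abs_mul]
      simp only [abs_neg, abs_one, one_mul]
      rw [abs_of_nonneg (by omega)]
    · rw [qc_shift_sum F hF c hcz]
      simpa using hcard
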